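/- If X inverts weak homotopy equivalences and Y is a locally compact Hausdorff space, then the mapping space X^Y = C(Y,X) with the compact-open topology also inverts weak homotopy equivalences. -/

import Mathlib

open ContinuousMap Topology

noncomputable section

/-- The setoid of homotopy on continuous maps `C(A, X)`. -/
def homotopySetoid (A X : Type*) [TopologicalSpace A] [TopologicalSpace X] :
    Setoid C(A, X) :=
  ⟨ContinuousMap.Homotopic, ContinuousMap.Homotopic.equivalence⟩

/-- `[A, X]`: homotopy classes of continuous maps `A → X`. -/
def HtpyClasses (A X : Type*) [TopologicalSpace A] [TopologicalSpace X] : Type _ :=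
  Quotient (homotopySetoid A X)

/-- Precomposition `f^* : [B, X] → [A, X]`, `[g] ↦ [g ∘ f]`. -/
def precomp {A B X : Type*} [TopologicalSpace A] [TopologicalSpace B] [TopologicalSpace X]
    (f : C(A, B)) : HtpyClasses B X → HtpyClasses A X :=
  Quotient.map (fun g => g.comp f)
    (fun _ _ h => h.comp (ContinuousMap.Homotopic.refl f))

/-- The induced map on path components. -/
def zerothMap {A B : Type*} [TopologicalSpace A] [TopologicalSpace B] (f : C(A, B)) :
    ZerothHomotopy A → ZerothHomotopy B :=
  Quotient.map f (fun _ _ h => Nonempty.map (fun p => p.map f.continuous) h)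

/-- The induced map on `n`-th homotopy groups. -/
def piMap {A B : Type*} [TopologicalSpace A] [TopologicalSpace B] (f : C(A, B)) (n : ℕ)
    (a : A) : HomotopyGroup (Fin n) A a → HomotopyGroup (Fin n) B (f a) :=
  Quotient.map
    (fun p => ⟨f.comp p.1, fun y hy => by rw [ContinuousMap.comp_apply, p.2 y hy]⟩)
    (fun _ _ h => Nonempty.map (fun H => H.compContinuousMap f) h)

/-- A continuous map is a weak homotopy equivalence if it induces a bijection on path
components and isomorphisms on all homotopy groups at all basepoints. -/
def IsWeakHomotopyEquiv {A B : Type*} [TopologicalSpace A] [TopologicalSpace B]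
    (f : C(A, B)) : Prop :=
  Function.Bijective (zerothMap f) ∧ ∀ (n : ℕ) (a : A), Function.Bijective (piMap f n a)

/-- `X` inverts weak homotopy equivalences: every weak homotopy equivalence `f : A → B`
induces a bijection `f^* : [B, X] → [A, X]`. -/
def InvertsWeakEquivs (X : Type) [TopologicalSpace X] : Prop :=
  ∀ (A B : Type) [TopologicalSpace A] [TopologicalSpace B] (f : C(A, B)),
    IsWeakHomotopyEquiv f → Function.Bijective (precomp (X := X) f)

/-! ### Auxiliary lemmas -/

section Aux

variable {A B Y X : Type*} [TopologicalSpace A] [TopologicalSpace B] [TopologicalSpace Y]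
  [TopologicalSpace X]

/-- The product of two homotopies rel `S` is a homotopy rel `S`. -/
def HomotopyRel.prodMk' {f₀ f₁ : C(A, X)} {g₀ g₁ : C(A, Y)} {S : Set A}
    (F : f₀.HomotopyRel f₁ S) (G : g₀.HomotopyRel g₁ S) :
    (f₀.prodMk g₀).HomotopyRel (f₁.prodMk g₁) S where
  toHomotopy := F.toHomotopy.prodMk G.toHomotopy
  prop' := fun t x hx => Prod.ext (F.prop t x hx) (G.prop t x hx)

/-- The `n`-th homotopy group of a product splits as a product. -/
def piProdEquiv (n : ℕ) (a : A) (y : Y) :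
    HomotopyGroup (Fin n) (A × Y) (a, y) ≃
      HomotopyGroup (Fin n) A a × HomotopyGroup (Fin n) Y y where
  toFun z := (piMap ContinuousMap.fst n (a, y) z, piMap ContinuousMap.snd n (a, y) z)
  invFun w :=
    Quotient.map₂
      (fun p q => ⟨p.1.prodMk q.1, fun t ht => Prod.ext (p.2 t ht) (q.2 t ht)⟩)
      (fun _ _ hp _ _ hq => Nonempty.map2 (fun H G => HomotopyRel.prodMk' H G) hp hq)
      w.1 w.2
  left_inv z := by
    induction z using Quotient.ind with
    | _ p => exact congrArg (Quotient.mk _) (Subtype.ext (ContinuousMap.ext fun _ => rfl))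
  right_inv w := by
    obtain ⟨w₁, w₂⟩ := w
    induction w₁ using Quotient.ind with
    | _ p =>
      induction w₂ using Quotient.ind with
      | _ q =>
        exact Prod.ext
          (congrArg (Quotient.mk _) (Subtype.ext (ContinuousMap.ext fun _ => rfl)))
          (congrArg (Quotient.mk _) (Subtype.ext (ContinuousMap.ext fun _ => rfl)))

/-- `π₀` of a product splits as a product. -/
def zerothProdEquiv : ZerothHomotopy (A × Y) ≃ ZerothHomotopy A × ZerothHomotopy Y where
  toFun z := (zerothMap ContinuousMap.fst z, zerothMap ContinuousMap.snd z)
  invFun w :=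
    Quotient.map₂ Prod.mk
      (fun _ _ hp _ _ hq => Nonempty.map2 (fun p q => p.prod q) hp hq) w.1 w.2
  left_inv z := by
    induction z using Quotient.ind with
    | _ p => rfl
  right_inv w := by
    obtain ⟨w₁, w₂⟩ := w
    induction w₁ using Quotient.ind with
    | _ p =>
      induction w₂ using Quotient.ind with
      | _ q => rfl

/-- If `f` is a weak homotopy equivalence, so is `f × id_Y`. -/
theorem isWeakHomotopyEquiv_prodMap_id {f : C(A, B)} (hf : IsWeakHomotopyEquiv f) :
    IsWeakHomotopyEquiv (f.prodMap (ContinuousMap.id Y)) := by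
  constructor
  · have key : zerothMap (f.prodMap (ContinuousMap.id Y)) =
        (zerothProdEquiv (A := B) (Y := Y)).symm ∘
          Prod.map (zerothMap f) id ∘ (zerothProdEquiv (A := A) (Y := Y)) := by
      funext z
      induction z using Quotient.ind with
      | _ p => rfl
    rw [key]
    exact (zerothProdEquiv.symm.bijective.comp
      ((hf.1.prodMap Function.bijective_id).comp zerothProdEquiv.bijective))
  · rintro n ⟨a, y⟩
    have key : piMap (f.prodMap (ContinuousMap.id Y)) n (a, y) =
        (piProdEquiv n (f a) y).symm ∘
          Prod.map (piMap f n a) id ∘ (piProdEquiv n a y) := by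
      funext z
      induction z using Quotient.ind with
      | _ p =>
        exact congrArg (Quotient.mk _) (Subtype.ext (ContinuousMap.ext fun _ => rfl))
    rw [key]
    exact ((piProdEquiv n (f a) y).symm.bijective.comp
      (((hf.2 n a).prodMap Function.bijective_id).comp (piProdEquiv n a y).bijective))

variable [LocallyCompactSpace Y]

/-- Uncurrying a homotopy of maps into a mapping space. -/
def uncurryHomotopy {g₀ g₁ : C(A, C(Y, X))} (H : g₀.Homotopy g₁) :
    (g₀.uncurry).Homotopy (g₁.uncurry) where
  toContinuousMap := (ContinuousMap.uncurry H.toContinuousMap).comp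
    ((Homeomorph.prodAssoc unitInterval A Y).symm : C(_, _))
  map_zero_left x := by
    show (H (0, x.1)) x.2 = _
    rw [H.apply_zero]
    rfl
  map_one_left x := by
    show (H (1, x.1)) x.2 = _
    rw [H.apply_one]
    rfl

/-- Currying a homotopy of maps out of a product. -/
def curryHomotopy {k₀ k₁ : C(A × Y, X)} (H : k₀.Homotopy k₁) :
    (k₀.curry).Homotopy (k₁.curry) where
  toContinuousMap := ContinuousMap.curry (H.toContinuousMap.comp
    ((Homeomorph.prodAssoc unitInterval A Y) : C((unitInterval × A) × Y, unitInterval × A × Y)))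
  map_zero_left a := ContinuousMap.ext fun y => H.apply_zero (a, y)
  map_one_left a := ContinuousMap.ext fun y => H.apply_one (a, y)

/-- The exponential correspondence on homotopy classes: `[A × Y, X] ≃ [A, C(Y, X)]`. -/
def curryClasses (A : Type*) [TopologicalSpace A] :
    HtpyClasses (A × Y) X ≃ HtpyClasses A C(Y, X) where
  toFun := Quotient.map ContinuousMap.curry (fun _ _ h => ⟨curryHomotopy h.some⟩)
  invFun := Quotient.map ContinuousMap.uncurry (fun _ _ h => ⟨uncurryHomotopy h.some⟩)
  left_inv z := by
    induction z using Quotient.ind with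
    | _ k => exact congrArg (Quotient.mk _) (ContinuousMap.ext fun _ => rfl)
  right_inv z := by
    induction z using Quotient.ind with
    | _ g => exact congrArg (Quotient.mk _) (ContinuousMap.ext fun _ =>
        ContinuousMap.ext fun _ => rfl)

end Aux

/-- If `X` inverts weak homotopy equivalences and `Y` is locally compact Hausdorff, then the
mapping space `C(Y, X)` with the compact-open topology also inverts weak homotopy
equivalences. -/
theorem stmt4 (X Y : Type) [TopologicalSpace X] [TopologicalSpace Y]
    [LocallyCompactSpace Y] [T2Space Y] (h : InvertsWeakEquivs X) :
    InvertsWeakEquivs C(Y, X) := by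
  intro A B _ _ f hf
  have hg : IsWeakHomotopyEquiv (f.prodMap (ContinuousMap.id Y)) :=
    isWeakHomotopyEquiv_prodMap_id hf
  have hb : Function.Bijective (precomp (X := X) (f.prodMap (ContinuousMap.id Y))) :=
    h (A × Y) (B × Y) _ hg
  have key : precomp (X := C(Y, X)) f =
      (curryClasses (Y := Y) (X := X) A) ∘
        precomp (X := X) (f.prodMap (ContinuousMap.id Y)) ∘
          (curryClasses (Y := Y) (X := X) B).symm := by
    funext z
    induction z using Quotient.ind with
    | _ k =>
      exact (congrArg (Quotient.mk _) (ContinuousMap.ext fun a =>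
        ContinuousMap.ext fun y => rfl)).symm
  rw [key]
  exact ((curryClasses A).bijective.comp (hb.comp (curryClasses B).symm.bijective))
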